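/- Let α ≥ β ≥ −1/2 be real numbers and write p_n^{(α,β)}(x) = P_n^{(α,β)}(x)/P_n^{(α,β)}(1). Then there exist constants δ > 0 and K_1 > 0, depending only on α and β, such that for every integer n ≥ α + β + 1 and every x ∈ [0, π] with 0 ≤ n x ≤ δ, one has 1 − p_n^{(α,β)}(cos x) ≥ K_1 (n x)². -/

import Mathlib

lemma gammaProd (x : ℝ) (hx : 0 < x) (k : ℕ) :
    Real.Gamma (x + k) = (∏ j ∈ Finset.range k, (x + j)) * Real.Gamma x := by
  induction k with
  | zero => simp
  | succ k ih =>
    have hxk : x + (k:ℝ) ≠ 0 := by positivity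
    have : x + ((k+1 : ℕ):ℝ) = (x + k) + 1 := by push_cast; ring
    rw [this, Real.Gamma_add_one hxk, ih, Finset.prod_range_succ]
    ring

lemma Bpos (α β : ℝ) (hα : -1/2 ≤ α) (hab : (-1:ℝ) ≤ α + β) (n : ℕ) (hn1 : 1 ≤ n) (k : ℕ) :
    0 < ∏ j ∈ Finset.range k, ((α+β+(n:ℝ)+1+j)/(α+1+j)) := by
  have hn1' : (1:ℝ) ≤ n := by exact_mod_cast hn1
  apply Finset.prod_pos
  intro j _
  have hj : (0:ℝ) ≤ j := Nat.cast_nonneg j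
  apply div_pos <;> linarith

lemma Ble (α β : ℝ) (hα : -1/2 ≤ α) (hab : (-1:ℝ) ≤ α + β) (n : ℕ) (hn : α + β + 1 ≤ n) (k : ℕ) (hk : k ≤ n) :
    ∏ j ∈ Finset.range k, ((α+β+(n:ℝ)+1+j)/(α+1+j)) ≤ (6*(n:ℝ))^k := by
  calc ∏ j ∈ Finset.range k, ((α+β+(n:ℝ)+1+j)/(α+1+j))
      ≤ ∏ _j ∈ Finset.range k, (6*(n:ℝ)) := by
        apply Finset.prod_le_prod
        · intro j _
          have hj : (0:ℝ) ≤ j := Nat.cast_nonneg j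
          have hn0 : (0:ℝ) ≤ n := Nat.cast_nonneg n
          have h1 : (0:ℝ) < α + 1 + j := by linarith
          have h2 : (0:ℝ) ≤ α+β+(n:ℝ)+1+j := by linarith
          exact div_nonneg h2 h1.le
        · intro j hj
          have hjn : (j:ℝ) < n := by
            have : j < k := Finset.mem_range.mp hj
            exact_mod_cast lt_of_lt_of_le this hk
          have hj0 : (0:ℝ) ≤ j := Nat.cast_nonneg j
          have hden : (1/2:ℝ) ≤ α + 1 + j := by linarith
          rw [div_le_iff₀ (by linarith)]
          nlinarith
    _ = (6*(n:ℝ))^k := by simp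

/-- The Jacobi polynomial `P_n^{(α,β)}`. -/
noncomputable def jacobiP (α β : ℝ) (n : ℕ) (x : ℝ) : ℝ :=
  Real.Gamma (α + n + 1) / (n.factorial * Real.Gamma (α + β + n + 1)) *
    ∑ k ∈ Finset.range (n + 1),
      (n.choose k : ℝ) * (Real.Gamma (α + β + n + k + 1) / Real.Gamma (α + k + 1)) *
        ((x - 1) / 2) ^ k

lemma ratio_eq (α β : ℝ) (hβ : -1/2 ≤ β) (hαβ : β ≤ α) (n : ℕ) (hn1 : 1 ≤ n) (y : ℝ) :
    jacobiP α β n y / jacobiP α β n 1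
      = ∑ k ∈ Finset.range (n+1), (n.choose k : ℝ) *
          (∏ j ∈ Finset.range k, ((α+β+n+1+j)/(α+1+j))) * ((y-1)/2)^k := by
  have hα : -1/2 ≤ α := le_trans hβ hαβ
  have hα1 : (0:ℝ) < α + 1 := by linarith
  have ha : (0:ℝ) < α + β + n + 1 := by
    have : (1:ℝ) ≤ n := by exact_mod_cast hn1
    linarith
  have hGa : 0 < Real.Gamma (α + β + n + 1) := Real.Gamma_pos_of_pos ha
  have hGα : 0 < Real.Gamma (α + 1) := Real.Gamma_pos_of_pos hα1
  have hGn : 0 < Real.Gamma (α + n + 1) := Real.Gamma_pos_of_pos (by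
    have : (1:ℝ) ≤ n := by exact_mod_cast hn1
    linarith)
  have hS1 : ∑ k ∈ Finset.range (n + 1),
      (n.choose k : ℝ) * (Real.Gamma (α + β + n + k + 1) / Real.Gamma (α + k + 1)) *
        (((1:ℝ) - 1) / 2) ^ k
      = Real.Gamma (α + β + n + 1) / Real.Gamma (α + 1) := by
    rw [Finset.sum_eq_single_of_mem 0 (Finset.mem_range.mpr (by omega))]
    · norm_num
    · intro k _ hk
      simp [zero_pow hk]
  have hterm : ∀ k ∈ Finset.range (n+1),
      ((n.choose k : ℝ) * (Real.Gamma (α + β + n + k + 1) / Real.Gamma (α + k + 1)) *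
        ((y - 1) / 2) ^ k) / (Real.Gamma (α + β + n + 1) / Real.Gamma (α + 1))
      = (n.choose k : ℝ) *
          (∏ j ∈ Finset.range k, ((α+β+n+1+j)/(α+1+j))) * ((y-1)/2)^k := by
    intro k _
    have e1 : α + β + (n:ℝ) + k + 1 = (α + β + n + 1) + k := by ring
    have e2 : α + (k:ℝ) + 1 = (α + 1) + k := by ring
    rw [e1, e2, gammaProd _ ha, gammaProd _ hα1]
    have hQ : 0 < ∏ j ∈ Finset.range k, ((α + 1) + (j:ℝ)) :=
      Finset.prod_pos fun j _ => by positivity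
    have : ∏ j ∈ Finset.range k, ((α+β+(n:ℝ)+1+j)/(α+1+j))
        = (∏ j ∈ Finset.range k, ((α+β+(n:ℝ)+1) + j)) / (∏ j ∈ Finset.range k, ((α+1) + j)) := by
      rw [Finset.prod_div_distrib]
    rw [this]
    field_simp
  unfold jacobiP
  rw [hS1, mul_div_mul_left _ _ (by positivity), Finset.sum_div]
  exact Finset.sum_congr rfl hterm

set_option maxHeartbeats 1600000 in
/-- lower quadratic bound `1 − p_n^{(α,β)}(cos x) ≥ K₁ (n x)²` for
n ≥ α + β + 1 and 0 ≤ n x ≤ δ, with δ, K₁ > 0 depending only on α and β. -/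
theorem stmt6 (α β : ℝ) (hβ : -1/2 ≤ β) (hαβ : β ≤ α) :
    ∃ δ > 0, ∃ K₁ > 0, ∀ n : ℕ, α + β + 1 ≤ (n:ℝ) →
      ∀ x ∈ Set.Icc (0:ℝ) Real.pi, (n:ℝ) * x ≤ δ →
        K₁ * ((n:ℝ) * x)^2 ≤ 1 - jacobiP α β n (Real.cos x) / jacobiP α β n 1 := by
  have hα : -1/2 ≤ α := le_trans hβ hαβ
  have hα1 : (0:ℝ) < α + 1 := by linarith
  have hα2 : (3/2:ℝ) ≤ α + 2 := by linarith
  have hab : (-1:ℝ) ≤ α + β := by linarith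
  have hπ : (0:ℝ) < Real.pi := Real.pi_pos
  refine ⟨1/(6*(α+2)), by positivity, 1/(2*(α+1)*Real.pi^2), by positivity, ?_⟩
  intro n hn x hx hδ
  obtain ⟨hx0, hxπ⟩ := hx
  rcases Nat.eq_zero_or_pos n with hn0 | hn1
  · subst hn0
    simp only [Nat.cast_zero, zero_mul]
    have he : jacobiP α β 0 (Real.cos x) = jacobiP α β 0 1 := by
      simp [jacobiP]
    rw [he]
    rcases eq_or_ne (jacobiP α β 0 1) 0 with h | h
    · simp [h]
    · rw [div_self h]; norm_num
  -- main case : n ≥ 1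
  have hn1' : (1:ℝ) ≤ n := by exact_mod_cast hn1
  have hn0' : (0:ℝ) < n := by linarith
  set s := Real.sin (x/2) with hsdef
  have hs0 : 0 ≤ s := Real.sin_nonneg_of_nonneg_of_le_pi (by linarith) (by linarith)
  have hsle : s ≤ x/2 := by
    have := Real.sin_le (show (0:ℝ) ≤ x/2 by linarith)
    linarith
  have hsge : x / Real.pi ≤ s := by
    have h := Real.mul_le_sin (x := x/2) (by linarith) (by linarith)
    have e : 2/Real.pi * (x/2) = x / Real.pi := by field_simp
    rw [e] at h; exact h
  have hcos : (Real.cos x - 1)/2 = -s^2 := by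
    have h := Real.sin_sq_eq_half_sub (x/2)
    have h2 : 2 * (x/2) = x := by ring
    rw [h2] at h
    rw [← hsdef] at h
    linarith
  -- the normalized polynomial as a sum
  have hrat := ratio_eq α β hβ hαβ n hn1 (Real.cos x)
  rw [hcos] at hrat
  -- abbreviations
  set B : ℕ → ℝ := fun k => ∏ j ∈ Finset.range k, ((α+β+(n:ℝ)+1+j)/(α+1+j)) with hBdef
  set T : ℕ → ℝ := fun j => (n.choose (j+1) : ℝ) * B (j+1) * s^(2*(j+1)) with hTdef
  have hBpos : ∀ k, 0 < B k := fun k => Bpos α β hα hab n hn1 k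
  have hBle : ∀ k, k ≤ n → B k ≤ (6*(n:ℝ))^k := fun k hk => Ble α β hα hab n hn k hk
  have hTnn : ∀ j, 0 ≤ T j := by
    intro j
    have := (hBpos (j+1)).le
    simp only [hTdef]
    positivity
  -- rewrite the sum, peeling off the k = 0 term
  rw [Finset.sum_range_succ'] at hrat
  have hterm' : ∀ j, (n.choose (j+1) : ℝ) * B (j+1) * (-s^2)^(j+1) = -((-1:ℝ)^j * T j) := by
    intro j
    have : (-s^2 : ℝ)^(j+1) = (-1:ℝ)^(j+1) * (s^2)^(j+1) := by
      rw [neg_pow]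
    rw [this, ← pow_mul, pow_succ]
    simp only [hTdef]
    ring
  have hkey : 1 - jacobiP α β n (Real.cos x) / jacobiP α β n 1
      = ∑ j ∈ Finset.range n, (-1:ℝ)^j * T j := by
    rw [hrat]
    have h0 : (n.choose 0 : ℝ) * B 0 * (-s^2)^0 = 1 := by
      simp [hBdef]
    rw [Finset.sum_congr rfl (fun j _ => hterm' j), h0, Finset.sum_neg_distrib]
    ring
  rw [hkey]
  -- split off j = 0
  have hsplit : ∑ j ∈ Finset.range n, (-1:ℝ)^j * T j
      = T 0 + ∑ j ∈ Finset.Ico 1 n, (-1:ℝ)^j * T j := by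
    rw [Finset.range_eq_Ico, Finset.sum_eq_sum_Ico_succ_bot hn1]
    simp
  -- each alternating term is ≥ -T j
  have htail : -(∑ j ∈ Finset.Ico 1 n, T j) ≤ ∑ j ∈ Finset.Ico 1 n, (-1:ℝ)^j * T j := by
    rw [← Finset.sum_neg_distrib]
    apply Finset.sum_le_sum
    intro j _
    rcases Nat.even_or_odd j with h | h
    · rw [h.neg_one_pow]
      have := hTnn j; linarith
    · rw [h.neg_one_pow]
      linarith
  -- the quantity u
  set u : ℝ := 6*(n:ℝ)^2*s^2 with hudef
  have hu0 : 0 ≤ u := by positivity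
  have hns : (n:ℝ)*s ≤ 1/(12*(α+2)) := by
    have h1 : (n:ℝ)*s ≤ (n:ℝ)*(x/2) := by
      apply mul_le_mul_of_nonneg_left hsle (by positivity)
    have h2 : (n:ℝ)*(x/2) = ((n:ℝ)*x)/2 := by ring
    have h3 : ((n:ℝ)*x)/2 ≤ (1/(6*(α+2)))/2 := by linarith
    have h4 : (1/(6*(α+2)))/2 = 1/(12*(α+2)) := by
      field_simp; ring
    linarith
  have hns0 : 0 ≤ (n:ℝ)*s := by positivity
  have hu : u ≤ 1/(24*(α+2)^2) := by
    have h1 : ((n:ℝ)*s)^2 ≤ (1/(12*(α+2)))^2 := by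
      apply pow_le_pow_left₀ hns0 hns
    have h2 : u = 6*((n:ℝ)*s)^2 := by rw [hudef]; ring
    have h3 : 6*(1/(12*(α+2)))^2 = 1/(24*(α+2)^2) := by
      field_simp; ring
    nlinarith
  have hu2 : u ≤ 1/2 := by
    have : 1/(24*(α+2)^2) ≤ (1:ℝ)/2 := by
      rw [div_le_div_iff₀ (by positivity) (by norm_num)]
      nlinarith [mul_le_mul hα2 hα2 (by norm_num : (0:ℝ) ≤ 3/2) (by linarith : (0:ℝ) ≤ α+2)]
    linarith
  have hu3 : u ≤ 1/(12*(α+1)) := by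
    have : 1/(24*(α+2)^2) ≤ 1/(12*(α+1)) := by
      rw [div_le_div_iff₀ (by positivity) (by positivity)]
      nlinarith
    linarith
  have huquad : u^2 ≤ u/(12*(α+1)) := by
    have : u * u ≤ u * (1/(12*(α+1))) := mul_le_mul_of_nonneg_left hu3 hu0
    calc u^2 = u * u := sq u
      _ ≤ u * (1/(12*(α+1))) := this
      _ = u/(12*(α+1)) := by ring
  -- tail bound : T j ≤ (u^2/2) * (1/2)^(j-1) for 1 ≤ j < n
  have hT : ∀ j ∈ Finset.Ico 1 n, T j ≤ (u^2/2) * (1/2:ℝ)^(j-1) := by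
    intro j hj
    obtain ⟨hj1, hjn⟩ := Finset.mem_Ico.mp hj
    have hch : (n.choose (j+1) : ℝ) ≤ (n:ℝ)^(j+1) / (j+1).factorial :=
      Nat.choose_le_pow_div (j+1) n
    have hBj : B (j+1) ≤ (6*(n:ℝ))^(j+1) := hBle (j+1) (by omega)
    have hfac : (2:ℝ) ≤ ((j+1).factorial : ℝ) := by
      have h1 : 2 ≤ j + 1 := by omega
      have h2 : j + 1 ≤ (j+1).factorial := Nat.self_le_factorial (j+1)
      exact_mod_cast le_trans h1 h2
    have hfac0 : (0:ℝ) < ((j+1).factorial : ℝ) := by positivity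
    have step1 : T j ≤ ((n:ℝ)^(j+1) / (j+1).factorial) * (6*(n:ℝ))^(j+1) * s^(2*(j+1)) := by
      simp only [hTdef]
      apply mul_le_mul_of_nonneg_right _ (by positivity)
      apply mul_le_mul hch hBj (hBpos (j+1)).le (by positivity)
    have step2 : ((n:ℝ)^(j+1) / (j+1).factorial) * (6*(n:ℝ))^(j+1) * s^(2*(j+1))
        = u^(j+1) / (j+1).factorial := by
      rw [hudef, pow_mul, div_mul_eq_mul_div, div_mul_eq_mul_div]
      congr 1
      rw [← mul_pow, ← mul_pow]
      congr 1
      ring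
    have step3 : u^(j+1) / ((j+1).factorial : ℝ) ≤ u^(j+1) / 2 := by
      apply div_le_div_of_nonneg_left (by positivity) (by norm_num) hfac
    have step4 : u^(j+1) = u^2 * u^(j-1) := by
      rw [← pow_add]
      congr 1
      omega
    have step5 : u^(j-1) ≤ (1/2:ℝ)^(j-1) := pow_le_pow_left₀ hu0 hu2 (j-1)
    calc T j ≤ u^(j+1) / (j+1).factorial := by rw [← step2]; exact step1
      _ ≤ u^(j+1) / 2 := step3
      _ = (u^2 * u^(j-1))/2 := by rw [step4]
      _ ≤ (u^2 * (1/2:ℝ)^(j-1))/2 := by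
          apply div_le_div_of_nonneg_right _ (by norm_num)
          exact mul_le_mul_of_nonneg_left step5 (by positivity)
      _ = (u^2/2) * (1/2:ℝ)^(j-1) := by ring
  -- sum of the tail
  have hgeom : ∑ j ∈ Finset.Ico 1 n, (u^2/2) * (1/2:ℝ)^(j-1) ≤ u^2 := by
    rw [← Finset.mul_sum]
    have hsum : ∑ j ∈ Finset.Ico 1 n, (1/2:ℝ)^(j-1) ≤ 2 := by
      rw [Finset.sum_Ico_eq_sum_range]
      have : ∀ i ∈ Finset.range (n-1), (1/2:ℝ)^(1+i-1) = (1/2:ℝ)^i := by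
        intro i _
        congr 1
        omega
      rw [Finset.sum_congr rfl this]
      rw [geom_sum_eq (by norm_num)]
      have h := pow_nonneg (by norm_num : (0:ℝ) ≤ 1/2) (n-1)
      have e : ((1/2:ℝ)^(n-1) - 1)/((1/2:ℝ) - 1) = 2 - 2*(1/2:ℝ)^(n-1) := by
        ring
      rw [e]; linarith
    calc (u^2/2) * ∑ j ∈ Finset.Ico 1 n, (1/2:ℝ)^(j-1) ≤ (u^2/2) * 2 :=
          mul_le_mul_of_nonneg_left hsum (by positivity)
      _ = u^2 := by ring
  have htailsum : ∑ j ∈ Finset.Ico 1 n, T j ≤ u^2 :=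
    le_trans (Finset.sum_le_sum hT) hgeom
  -- lower bound on T 0
  have hT0 : u/(6*(α+1)) ≤ T 0 := by
    have hB1 : B 1 = (α+β+(n:ℝ)+1)/(α+1) := by
      simp [hBdef]
    have hch1 : (n.choose 1 : ℝ) = n := by simp
    have hT0e : T 0 = (n:ℝ) * ((α+β+(n:ℝ)+1)/(α+1)) * s^2 := by
      simp only [hTdef]
      rw [hB1, hch1]
    rw [hT0e, hudef]
    rw [div_le_iff₀ (by positivity), mul_comm]
    have hnum : (n:ℝ) ≤ α+β+(n:ℝ)+1 := by linarith
    have e : (n:ℝ) * ((α+β+(n:ℝ)+1)/(α+1)) * s^2 * (6*(α+1))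
        = 6 * ((n:ℝ) * (α+β+(n:ℝ)+1)) * s^2 * ((α+1)/(α+1)) := by ring
    rw [e, div_self (by positivity : (α+1:ℝ) ≠ 0), mul_one]
    nlinarith [sq_nonneg s]
  -- final assembly
  have hKle : 1/(2*(α+1)*Real.pi^2) * ((n:ℝ)*x)^2 ≤ u/(12*(α+1)) := by
    have h1 : (x/Real.pi)^2 ≤ s^2 := pow_le_pow_left₀ (by positivity) hsge 2
    have e1 : 1/(2*(α+1)*Real.pi^2) * ((n:ℝ)*x)^2 = (n:ℝ)^2 * (x/Real.pi)^2 / (2*(α+1)) := by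
      field_simp
    have e2 : u/(12*(α+1)) = (n:ℝ)^2 * s^2/(2*(α+1)) := by
      rw [hudef, div_eq_div_iff (by positivity) (by positivity)]; ring
    rw [e1, e2]
    apply div_le_div_of_nonneg_right _ (by positivity)
    exact mul_le_mul_of_nonneg_left h1 (by positivity)
  have hne : (α+1:ℝ) ≠ 0 := ne_of_gt hα1
  have h7 : u/(6*(α+1)) = 2*(u/(12*(α+1))) := by field_simp; ring
  rw [hsplit]
  linarith
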